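/- For every positive integer m and every ε ∈ (0, 1/2), the integral I₇(ε) = ∫₁^∞ ε³ t³ / (√(1+t²)(ε²t² + π²m²)²) dt satisfies |I₇(ε) − 1/(4m)| ≤ C ε² / m³ for an absolute constant C independent of m and ε. -/

import Mathlib

open Real MeasureTheory Set Filter Topology

noncomputable def Faux (ε a t : ℝ) : ℝ :=
  Real.arctan (ε * t / a) / (2 * a) - ε * t / (2 * (ε ^ 2 * t ^ 2 + a ^ 2))

noncomputable def Haux (ε a t : ℝ) : ℝ :=
  ε ^ 2 / (2 * a ^ 3) * Real.arctan (ε * t / a)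

lemma hasDerivAt_linear (ε a t : ℝ) : HasDerivAt (fun t : ℝ => ε * t / a) (ε / a) t := by
  simpa using ((hasDerivAt_id t).const_mul ε).div_const a

lemma hasDerivAt_Faux {ε a : ℝ} (ha : 0 < a) (t : ℝ) :
    HasDerivAt (Faux ε a) (ε ^ 3 * t ^ 2 / (ε ^ 2 * t ^ 2 + a ^ 2) ^ 2) t := by
  have hden : (0:ℝ) < ε ^ 2 * t ^ 2 + a ^ 2 := by positivity
  have h1 : HasDerivAt (fun t : ℝ => Real.arctan (ε * t / a) / (2 * a))
      ((1 / (1 + (ε * t / a) ^ 2) * (ε / a)) / (2 * a)) t :=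
    ((Real.hasDerivAt_arctan (ε * t / a)).comp t (hasDerivAt_linear ε a t)).div_const (2 * a)
  have h2 : HasDerivAt (fun t : ℝ => ε * t / (2 * (ε ^ 2 * t ^ 2 + a ^ 2)))
      ((ε * (2 * (ε ^ 2 * t ^ 2 + a ^ 2)) - ε * t * (2 * (ε ^ 2 * (2 * t)))) /
        (2 * (ε ^ 2 * t ^ 2 + a ^ 2)) ^ 2) t := by
    have hu : HasDerivAt (fun t : ℝ => ε * t) ε t := by
      simpa using (hasDerivAt_id t).const_mul ε
    have hv : HasDerivAt (fun t : ℝ => 2 * (ε ^ 2 * t ^ 2 + a ^ 2)) (2 * (ε ^ 2 * (2 * t))) t := by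
      have h0 : HasDerivAt (fun t : ℝ => ε ^ 2 * t ^ 2 + a ^ 2) (ε ^ 2 * (2 * t)) t := by
        have := ((hasDerivAt_pow 2 t).const_mul (ε ^ 2)).add_const (a ^ 2)
        simpa using this
      simpa using h0.const_mul 2
    exact hu.div hv (by positivity)
  have h := h1.sub h2
  refine h.congr_deriv ?_
  have ha' : a ≠ 0 := ne_of_gt ha
  have hd' : (ε ^ 2 * t ^ 2 + a ^ 2) ≠ 0 := ne_of_gt hden
  have h1a : (1 + (ε * t / a) ^ 2) ≠ 0 := by positivity
  field_simp
  ring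

lemma hasDerivAt_Haux {ε a : ℝ} (ha : 0 < a) (t : ℝ) :
    HasDerivAt (Haux ε a) (ε ^ 3 / (2 * a ^ 2 * (ε ^ 2 * t ^ 2 + a ^ 2))) t := by
  have hden : (0:ℝ) < ε ^ 2 * t ^ 2 + a ^ 2 := by positivity
  have h1 : HasDerivAt (fun t : ℝ => Real.arctan (ε * t / a))
      (1 / (1 + (ε * t / a) ^ 2) * (ε / a)) t :=
    HasDerivAt.comp (h₂ := Real.arctan) t (Real.hasDerivAt_arctan (ε * t / a)) (hasDerivAt_linear ε a t)
  have h := h1.const_mul (ε ^ 2 / (2 * a ^ 3))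
  refine h.congr_deriv ?_
  have ha' : a ≠ 0 := ne_of_gt ha
  have h1a : (1 + (ε * t / a) ^ 2) ≠ 0 := by positivity
  field_simp
  ring

lemma tendsto_linear_atTop {ε a : ℝ} (hε : 0 < ε) (ha : 0 < a) :
    Tendsto (fun t : ℝ => ε * t / a) atTop atTop := by
  apply Tendsto.atTop_div_const ha
  exact Tendsto.const_mul_atTop hε tendsto_id

lemma tendsto_arctan_comp {ε a : ℝ} (hε : 0 < ε) (ha : 0 < a) :
    Tendsto (fun t : ℝ => Real.arctan (ε * t / a)) atTop (𝓝 (π / 2)) :=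
  (Real.tendsto_arctan_atTop.mono_right nhdsWithin_le_nhds).comp
    (tendsto_linear_atTop hε ha)

lemma tendsto_Faux {ε a : ℝ} (hε : 0 < ε) (ha : 0 < a) :
    Tendsto (Faux ε a) atTop (𝓝 (π / (4 * a))) := by
  have h1 : Tendsto (fun t : ℝ => Real.arctan (ε * t / a) / (2 * a)) atTop
      (𝓝 ((π / 2) / (2 * a))) := (tendsto_arctan_comp hε ha).div_const _
  have h2 : Tendsto (fun t : ℝ => ε * t / (2 * (ε ^ 2 * t ^ 2 + a ^ 2))) atTop (𝓝 0) := by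
    have hub : Tendsto (fun t : ℝ => (2 * ε * t)⁻¹) atTop (𝓝 0) := by
      apply Tendsto.inv_tendsto_atTop
      exact Tendsto.const_mul_atTop (by positivity) tendsto_id
    have hlb : Tendsto (fun _ : ℝ => (0:ℝ)) atTop (𝓝 0) := tendsto_const_nhds
    apply tendsto_of_tendsto_of_tendsto_of_le_of_le' hlb hub
    · filter_upwards [eventually_gt_atTop (0:ℝ)] with t ht
      positivity
    · filter_upwards [eventually_gt_atTop (0:ℝ)] with t ht
      rw [inv_eq_one_div, div_le_div_iff₀ (by positivity) (by positivity)]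
      nlinarith [sq_nonneg a, ht.le, hε.le]
  have h := h1.sub h2
  simp only [sub_zero] at h
  convert h using 2
  · rfl
  · ring

lemma ContFaux {ε a : ℝ} (ha : 0 < a) : Continuous (Faux ε a) := by
  apply Continuous.sub
  · apply Continuous.div_const
    exact Real.continuous_arctan.comp ((continuous_const.mul continuous_id).div_const a)
  · apply Continuous.div
    · exact continuous_const.mul continuous_id
    · continuity
    · intro t; positivity

lemma integral_g {ε a : ℝ} (hε : 0 < ε) (ha : 0 < a) (c : ℝ) :
    ∫ t in Ioi c, ε ^ 3 * t ^ 2 / (ε ^ 2 * t ^ 2 + a ^ 2) ^ 2 = π / (4 * a) - Faux ε a c :=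
  integral_Ioi_of_hasDerivAt_of_nonneg ((ContFaux ha).continuousWithinAt)
    (fun x _ => hasDerivAt_Faux ha x) (fun x _ => by positivity) (tendsto_Faux hε ha)

lemma integrable_g {ε a : ℝ} (hε : 0 < ε) (ha : 0 < a) (c : ℝ) :
    IntegrableOn (fun t => ε ^ 3 * t ^ 2 / (ε ^ 2 * t ^ 2 + a ^ 2) ^ 2) (Ioi c) :=
  integrableOn_Ioi_deriv_of_nonneg ((ContFaux ha).continuousWithinAt)
    (fun x _ => hasDerivAt_Faux ha x) (fun x _ => by positivity) (tendsto_Faux hε ha)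

lemma integral_h {ε a : ℝ} (hε : 0 < ε) (ha : 0 < a) :
    ∫ t in Ioi (1:ℝ), ε ^ 3 / (2 * a ^ 2 * (ε ^ 2 * t ^ 2 + a ^ 2)) ≤ π * ε ^ 2 / (4 * a ^ 3) := by
  have hcont : Continuous (Haux ε a) :=
    continuous_const.mul (Real.continuous_arctan.comp
      ((continuous_const.mul continuous_id).div_const a))
  have htd : Tendsto (Haux ε a) atTop (𝓝 (ε ^ 2 / (2 * a ^ 3) * (π / 2))) :=
    (tendsto_arctan_comp hε ha).const_mul _
  have heq := integral_Ioi_of_hasDerivAt_of_nonneg (hcont.continuousWithinAt)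
    (fun x (_ : x ∈ Ioi (1:ℝ)) => hasDerivAt_Haux ha x) (fun x _ => by positivity) htd
  rw [heq]
  have h0 : 0 ≤ Haux ε a 1 := by
    unfold Haux
    have h1 : 0 ≤ Real.arctan (ε * 1 / a) := by
      rw [← Real.arctan_zero]
      exact Real.arctan_strictMono.monotone (by positivity)
    positivity
  have he : ε ^ 2 / (2 * a ^ 3) * (π / 2) = π * ε ^ 2 / (4 * a ^ 3) := by ring
  linarith [h0]

lemma integrable_h {ε a : ℝ} (hε : 0 < ε) (ha : 0 < a) :
    IntegrableOn (fun t => ε ^ 3 / (2 * a ^ 2 * (ε ^ 2 * t ^ 2 + a ^ 2))) (Ioi (1:ℝ)) := by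
  have hcont : Continuous (Haux ε a) :=
    continuous_const.mul (Real.continuous_arctan.comp
      ((continuous_const.mul continuous_id).div_const a))
  have htd : Tendsto (Haux ε a) atTop (𝓝 (ε ^ 2 / (2 * a ^ 3) * (π / 2))) :=
    (tendsto_arctan_comp hε ha).const_mul _
  exact integrableOn_Ioi_deriv_of_nonneg (hcont.continuousWithinAt)
    (fun x (_ : x ∈ Ioi (1:ℝ)) => hasDerivAt_Haux ha x) (fun x _ => by positivity) htd

lemma pointwise_bounds {ε a : ℝ} (hε : 0 < ε) (ha : 0 < a) {t : ℝ} (ht : 1 < t) :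
    0 ≤ ε ^ 3 * t ^ 3 / (Real.sqrt (1 + t ^ 2) * (ε ^ 2 * t ^ 2 + a ^ 2) ^ 2) ∧
    ε ^ 3 * t ^ 3 / (Real.sqrt (1 + t ^ 2) * (ε ^ 2 * t ^ 2 + a ^ 2) ^ 2) ≤
      ε ^ 3 * t ^ 2 / (ε ^ 2 * t ^ 2 + a ^ 2) ^ 2 ∧
    ε ^ 3 * t ^ 2 / (ε ^ 2 * t ^ 2 + a ^ 2) ^ 2 -
      ε ^ 3 * t ^ 3 / (Real.sqrt (1 + t ^ 2) * (ε ^ 2 * t ^ 2 + a ^ 2) ^ 2) ≤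
      ε ^ 3 / (2 * a ^ 2 * (ε ^ 2 * t ^ 2 + a ^ 2)) := by
  have ht0 : (0:ℝ) < t := lt_trans one_pos ht
  have hs2 : Real.sqrt (1 + t ^ 2) ^ 2 = 1 + t ^ 2 := Real.sq_sqrt (by positivity)
  have hs0 : 0 < Real.sqrt (1 + t ^ 2) := Real.sqrt_pos.mpr (by positivity)
  set s : ℝ := Real.sqrt (1 + t ^ 2) with hs_def
  have hts : t ≤ s := by nlinarith
  have hD : (0:ℝ) < ε ^ 2 * t ^ 2 + a ^ 2 := by positivity
  have hf0 : 0 ≤ ε ^ 3 * t ^ 3 / (s * (ε ^ 2 * t ^ 2 + a ^ 2) ^ 2) := by positivity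
  have hfg : ε ^ 3 * t ^ 3 / (s * (ε ^ 2 * t ^ 2 + a ^ 2) ^ 2) ≤
      ε ^ 3 * t ^ 2 / (ε ^ 2 * t ^ 2 + a ^ 2) ^ 2 := by
    rw [div_le_div_iff₀ (by positivity) (by positivity)]
    nlinarith [mul_le_mul_of_nonneg_left hts
      (show (0:ℝ) ≤ ε ^ 3 * t ^ 2 * (ε ^ 2 * t ^ 2 + a ^ 2) ^ 2 by positivity)]
  refine ⟨hf0, hfg, ?_⟩
  have h1 : (s - t) * (s + t) = 1 := by nlinarith
  have h2' : 2 * t * (s - t) ≤ 1 := by nlinarith [sub_nonneg.mpr hts]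
  have h3 : a ^ 2 * t * (2 * t * (s - t)) ≤ a ^ 2 * t * 1 :=
    mul_le_mul_of_nonneg_left h2' (by positivity)
  have key : 2 * a ^ 2 * t ^ 2 * (s - t) ≤ s * (ε ^ 2 * t ^ 2 + a ^ 2) := by
    have h4 : a ^ 2 * t ≤ a ^ 2 * s := mul_le_mul_of_nonneg_left hts (by positivity)
    nlinarith [mul_nonneg (mul_nonneg (sq_nonneg ε) (sq_nonneg t)) hs0.le]
  have heq : ε ^ 3 * t ^ 2 / (ε ^ 2 * t ^ 2 + a ^ 2) ^ 2 -
      ε ^ 3 * t ^ 3 / (s * (ε ^ 2 * t ^ 2 + a ^ 2) ^ 2) =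
      ε ^ 3 * t ^ 2 * (s - t) / (s * (ε ^ 2 * t ^ 2 + a ^ 2) ^ 2) := by
    field_simp
  rw [heq, div_le_div_iff₀ (by positivity) (by positivity)]
  calc ε ^ 3 * t ^ 2 * (s - t) * (2 * a ^ 2 * (ε ^ 2 * t ^ 2 + a ^ 2))
      = (ε ^ 3 * (ε ^ 2 * t ^ 2 + a ^ 2)) * (2 * a ^ 2 * t ^ 2 * (s - t)) := by ring
    _ ≤ (ε ^ 3 * (ε ^ 2 * t ^ 2 + a ^ 2)) * (s * (ε ^ 2 * t ^ 2 + a ^ 2)) :=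
        mul_le_mul_of_nonneg_left key (by positivity)
    _ = ε ^ 3 * (s * (ε ^ 2 * t ^ 2 + a ^ 2) ^ 2) := by ring

/-- For every positive integer `m` and `ε ∈ (0, 1/2)`, the integral
`I₇(ε) = ∫₁^∞ ε³t³/(√(1+t²)(ε²t² + π²m²)²) dt` satisfies
`|I₇(ε) - 1/(4m)| ≤ C ε²/m³` for an absolute constant `C`. -/
theorem stmt_11 :
    ∃ C : ℝ, 0 < C ∧ ∀ m : ℕ, 0 < m → ∀ ε : ℝ, 0 < ε → ε < 1 / 2 →
      |(∫ t in Ioi (1 : ℝ),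
          ε ^ 3 * t ^ 3 / (Real.sqrt (1 + t ^ 2) * (ε ^ 2 * t ^ 2 + π ^ 2 * (m : ℝ) ^ 2) ^ 2)) -
        1 / (4 * (m : ℝ))| ≤ C * ε ^ 2 / (m : ℝ) ^ 3 := by
  refine ⟨2, by norm_num, ?_⟩
  intro m hm ε hε hε2
  have hm0 : (0:ℝ) < m := by exact_mod_cast hm
  have hm1 : (1:ℝ) ≤ m := by exact_mod_cast hm
  have hπ : (0:ℝ) < π := pi_pos
  have hπ3 : (3:ℝ) < π := pi_gt_three
  have ha : (0:ℝ) < π * m := by positivity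
  have hrw : π ^ 2 * (m:ℝ) ^ 2 = (π * m) ^ 2 := by ring
  simp only [hrw]
  -- continuity of the integrand
  have hfc : Continuous (fun t : ℝ =>
      ε ^ 3 * t ^ 3 / (Real.sqrt (1 + t ^ 2) * (ε ^ 2 * t ^ 2 + (π * m) ^ 2) ^ 2)) := by
    apply Continuous.div
    · exact continuous_const.mul (continuous_pow 3)
    · exact ((continuous_const.add (continuous_pow 2)).sqrt).mul
        (((continuous_const.mul (continuous_pow 2)).add continuous_const).pow 2)
    · intro t
      have h1 : 0 < Real.sqrt (1 + t ^ 2) := Real.sqrt_pos.mpr (by positivity)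
      have h2 : 0 < (ε ^ 2 * t ^ 2 + (π * m) ^ 2) ^ 2 := by positivity
      positivity
  have hg_int1 : IntegrableOn
      (fun t : ℝ => ε ^ 3 * t ^ 2 / (ε ^ 2 * t ^ 2 + (π * m) ^ 2) ^ 2) (Ioi 1) :=
    integrable_g hε ha 1
  have hf_int : IntegrableOn (fun t : ℝ =>
      ε ^ 3 * t ^ 3 / (Real.sqrt (1 + t ^ 2) * (ε ^ 2 * t ^ 2 + (π * m) ^ 2) ^ 2)) (Ioi 1) := by
    apply hg_int1.mono' (hfc.aestronglyMeasurable.restrict)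
    refine ae_restrict_of_forall_mem measurableSet_Ioi ?_
    intro t ht
    rw [Real.norm_eq_abs, abs_of_nonneg (pointwise_bounds hε ha ht).1]
    exact (pointwise_bounds hε ha ht).2.1
  -- value of the model integral on Ioi 0
  have hB : (∫ t in Ioi (0:ℝ), ε ^ 3 * t ^ 2 / (ε ^ 2 * t ^ 2 + (π * m) ^ 2) ^ 2)
      = 1 / (4 * (m:ℝ)) := by
    rw [integral_g hε ha 0]
    have h0 : Faux ε (π * m) 0 = 0 := by simp [Faux]
    rw [h0]
    field_simp
    ring
  -- splitting
  have hsplit : (∫ t in Ioi (0:ℝ), ε ^ 3 * t ^ 2 / (ε ^ 2 * t ^ 2 + (π * m) ^ 2) ^ 2) =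
      (∫ t in Ioc (0:ℝ) 1, ε ^ 3 * t ^ 2 / (ε ^ 2 * t ^ 2 + (π * m) ^ 2) ^ 2) +
      ∫ t in Ioi (1:ℝ), ε ^ 3 * t ^ 2 / (ε ^ 2 * t ^ 2 + (π * m) ^ 2) ^ 2 := by
    rw [← Ioc_union_Ioi_eq_Ioi (zero_le_one' ℝ)]
    exact setIntegral_union (Ioc_disjoint_Ioi le_rfl) measurableSet_Ioi
      ((integrable_g hε ha 0).mono_set Ioc_subset_Ioi_self) hg_int1
  -- bounds on the Ioc piece
  have hIoc_nonneg : 0 ≤ ∫ t in Ioc (0:ℝ) 1, ε ^ 3 * t ^ 2 / (ε ^ 2 * t ^ 2 + (π * m) ^ 2) ^ 2 := by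
    apply setIntegral_nonneg measurableSet_Ioc
    intro t _
    positivity
  have hIoc_le : (∫ t in Ioc (0:ℝ) 1, ε ^ 3 * t ^ 2 / (ε ^ 2 * t ^ 2 + (π * m) ^ 2) ^ 2)
      ≤ ε ^ 3 / (π * m) ^ 4 := by
    have hle : (∫ t in Ioc (0:ℝ) 1, ε ^ 3 * t ^ 2 / (ε ^ 2 * t ^ 2 + (π * m) ^ 2) ^ 2)
        ≤ ∫ _ in Ioc (0:ℝ) 1, ε ^ 3 / (π * m) ^ 4 := by
      apply setIntegral_mono_on ((integrable_g hε ha 0).mono_set Ioc_subset_Ioi_self)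
        (integrableOn_const measure_Ioc_lt_top.ne) measurableSet_Ioc
      intro t htm
      apply div_le_div₀ (by positivity)
      · have ht1 : t ^ 2 ≤ 1 := by nlinarith [htm.1, htm.2]
        nlinarith [pow_pos hε 3, ht1]
      · positivity
      · nlinarith [mul_nonneg (sq_nonneg ε) (sq_nonneg t), sq_nonneg (ε * t), sq_nonneg (π * m)]
    rw [setIntegral_const] at hle
    simpa [Real.volume_Ioc] using hle
  -- bounds on the tail
  have hmono : (∫ t in Ioi (1:ℝ),
        ε ^ 3 * t ^ 3 / (Real.sqrt (1 + t ^ 2) * (ε ^ 2 * t ^ 2 + (π * m) ^ 2) ^ 2))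
      ≤ ∫ t in Ioi (1:ℝ), ε ^ 3 * t ^ 2 / (ε ^ 2 * t ^ 2 + (π * m) ^ 2) ^ 2 :=
    setIntegral_mono_on hf_int hg_int1 measurableSet_Ioi
      (fun t ht => (pointwise_bounds hε ha ht).2.1)
  have htail : (∫ t in Ioi (1:ℝ), ε ^ 3 * t ^ 2 / (ε ^ 2 * t ^ 2 + (π * m) ^ 2) ^ 2) -
      (∫ t in Ioi (1:ℝ),
        ε ^ 3 * t ^ 3 / (Real.sqrt (1 + t ^ 2) * (ε ^ 2 * t ^ 2 + (π * m) ^ 2) ^ 2))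
      ≤ π * ε ^ 2 / (4 * (π * m) ^ 3) := by
    have h1 : (∫ t in Ioi (1:ℝ), (ε ^ 3 * t ^ 2 / (ε ^ 2 * t ^ 2 + (π * m) ^ 2) ^ 2 -
        ε ^ 3 * t ^ 3 / (Real.sqrt (1 + t ^ 2) * (ε ^ 2 * t ^ 2 + (π * m) ^ 2) ^ 2)))
        ≤ ∫ t in Ioi (1:ℝ), ε ^ 3 / (2 * (π * m) ^ 2 * (ε ^ 2 * t ^ 2 + (π * m) ^ 2)) :=
      setIntegral_mono_on (hg_int1.sub hf_int) (integrable_h hε ha) measurableSet_Ioi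
        (fun t ht => (pointwise_bounds hε ha ht).2.2)
    rw [integral_sub hg_int1 hf_int] at h1
    exact h1.trans (integral_h hε ha)
  -- assemble
  have habs : |(∫ t in Ioi (1:ℝ),
        ε ^ 3 * t ^ 3 / (Real.sqrt (1 + t ^ 2) * (ε ^ 2 * t ^ 2 + (π * m) ^ 2) ^ 2)) -
      1 / (4 * (m:ℝ))| ≤ π * ε ^ 2 / (4 * (π * m) ^ 3) + ε ^ 3 / (π * m) ^ 4 := by
    rw [abs_le]
    constructor <;> linarith
  refine habs.trans ?_
  have hb1 : π * ε ^ 2 / (4 * (π * m) ^ 3) ≤ ε ^ 2 / (m:ℝ) ^ 3 := by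
    rw [div_le_div_iff₀ (by positivity) (by positivity)]
    have hπ2 : 9 < π ^ 2 := by nlinarith
    have hX : 0 ≤ π * ε ^ 2 * (m:ℝ) ^ 3 := by positivity
    have hexp : ε ^ 2 * (4 * (π * (m:ℝ)) ^ 3) = 4 * π ^ 2 * (π * ε ^ 2 * (m:ℝ) ^ 3) := by ring
    rw [hexp]
    nlinarith [hX, hπ2]
  have hb2 : ε ^ 3 / (π * m) ^ 4 ≤ ε ^ 2 / (m:ℝ) ^ 3 := by
    have hd : (m:ℝ) ^ 3 ≤ (π * (m:ℝ)) ^ 4 := by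
      have h1 : (m:ℝ) ^ 3 ≤ (m:ℝ) ^ 4 := pow_le_pow_right₀ hm1 (by norm_num)
      have h2 : (m:ℝ) ^ 4 ≤ (π * (m:ℝ)) ^ 4 :=
        pow_le_pow_left₀ hm0.le (le_mul_of_one_le_left hm0.le (by linarith)) 4
      linarith
    have hn : ε ^ 3 ≤ ε ^ 2 := pow_le_pow_of_le_one hε.le (by linarith) (by norm_num)
    exact div_le_div₀ (by positivity) hn (by positivity) hd
  rw [show (2:ℝ) * ε ^ 2 / (m:ℝ) ^ 3 = ε ^ 2 / (m:ℝ) ^ 3 + ε ^ 2 / (m:ℝ) ^ 3 by ring]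
  linarith
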